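/- Let N > 0 and let a : [−N, N] → ℝ be continuous; set M_N = max_{|ξ| ≤ N} |a(ξ)|. Let u₁, u₂ ∈ ℝ with |u₁| < N and |u₂| < N, and let M_b ≥ max{|a(ξ)| : |ξ| ≤ max(|u₁|, |u₂|)}. Let f̄₁ : [−N, N] → [0, 1] and f̄₂ : [−N, N] → [−1, 0] be non-increasing functions, and define m̄₁(ξ) = M_N·max(u₁ − ξ, 0) − ∫_ξ^N (−a(η)) f̄₁(η) dη and m̄₂(ξ) = ∫_{−N}^ξ (−a(η)) f̄₂(η) dη + M_N·max(ξ − u₂, 0). Assume m̄₁(ξ) ≥ 0 and m̄₂(ξ) ≥ 0 for all ξ ∈ [−N, N]. Then −∫_{−N}^N (−a(ξ)) f̄₁(ξ) f̄₂(ξ) dξ ≤ M_b·max(u₁ − u₂, 0). -/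

import Mathlib

open MeasureTheory intervalIntegral

/-- If `S` is upward closed and all right-tail integrals of `h` on `[c,d]` are nonpositive,
then the integral of `h` over `S ∩ [c,d]` is nonpositive. -/
private lemma BDE_level
    {c d : ℝ} (hcd : c ≤ d) {h : ℝ → ℝ}
    (hh : IntervalIntegrable h volume c d)
    (S : Set ℝ) (hS : ∀ ⦃x y : ℝ⦄, x ∈ S → x ≤ y → y ∈ S)
    (hH : ∀ ξ ∈ Set.Icc c d, (∫ t in ξ..d, h t) ≤ 0) :
    IntervalIntegrable (S.indicator h) volume c d ∧
      (∫ t in c..d, S.indicator h t) ≤ 0 := by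
  obtain ⟨s, hs, hae⟩ : ∃ s ∈ Set.Icc c d,
      ∀ᵐ x : ℝ, x ∈ Set.Ioc c d → S.indicator h x = (Set.Ioc s d).indicator h x := by
    by_cases hdS : d ∈ S
    · by_cases hcS : c ∈ S
      · refine ⟨c, ⟨le_refl c, hcd⟩, Filter.Eventually.of_forall fun x hx => ?_⟩
        rw [Set.indicator_of_mem (hS hcS hx.1.le) h, Set.indicator_of_mem hx h]
      · have hne : S.Nonempty := ⟨d, hdS⟩
        have hlb : c ∈ lowerBounds S := by
          intro x hx
          by_contra hcx
          exact hcS (hS hx (le_of_not_ge hcx))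
        have hcs : c ≤ sInf S := le_csInf hne fun b hb => hlb hb
        have hsd : sInf S ≤ d := csInf_le ⟨c, hlb⟩ hdS
        have hns : ∀ᵐ x : ℝ, x ≠ sInf S := by
          refine (MeasureTheory.ae_iff).mpr ?_
          have he : {a : ℝ | ¬ a ≠ sInf S} = {sInf S} := by ext x; simp
          rw [he]
          exact measure_singleton _
        refine ⟨sInf S, ⟨hcs, hsd⟩, hns.mono fun x hxs hx => ?_⟩
        rcases lt_or_gt_of_ne hxs with hlt | hgt
        · rw [Set.indicator_of_notMem
            (fun hxS => absurd (csInf_le ⟨c, hlb⟩ hxS) (not_le.mpr hlt)) h,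
            Set.indicator_of_notMem (fun hmem => absurd hmem.1 (not_lt.mpr hlt.le)) h]
        · have hxS : x ∈ S := by
            obtain ⟨y, hyS, hyx⟩ := exists_lt_of_csInf_lt hne hgt
            exact hS hyS hyx.le
          rw [Set.indicator_of_mem hxS h, Set.indicator_of_mem (Set.mem_Ioc.mpr ⟨hgt, hx.2⟩) h]
    · refine ⟨d, ⟨hcd, le_refl d⟩, Filter.Eventually.of_forall fun x hx => ?_⟩
      rw [Set.indicator_of_notMem (fun hxS => hdS (hS hxS hx.2)) h,
        Set.indicator_of_notMem (fun hmem => absurd (hmem.1.trans_le hmem.2) (lt_irrefl d)) h]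
  have hIoc : IntegrableOn h (Set.Ioc c d) volume :=
    (intervalIntegrable_iff_integrableOn_Ioc_of_le hcd).mp hh
  have hind : Integrable ((Set.Ioc s d).indicator h) (volume.restrict (Set.Ioc c d)) :=
    hIoc.indicator measurableSet_Ioc
  have haer : S.indicator h =ᵐ[volume.restrict (Set.Ioc c d)] (Set.Ioc s d).indicator h :=
    (ae_restrict_iff' measurableSet_Ioc).mpr hae
  have hSint : Integrable (S.indicator h) (volume.restrict (Set.Ioc c d)) :=
    hind.congr haer.symm
  constructor
  · rw [intervalIntegrable_iff_integrableOn_Ioc_of_le hcd]; exact hSint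
  · have h1 : (∫ t in c..d, S.indicator h t) = ∫ t in c..d, (Set.Ioc s d).indicator h t := by
      refine intervalIntegral.integral_congr_ae ?_
      rw [Set.uIoc_of_le hcd]
      exact hae
    rw [h1, integral_of_le hcd, MeasureTheory.setIntegral_indicator measurableSet_Ioc,
      Set.Ioc_inter_Ioc, sup_eq_right.mpr hs.1, min_self, ← integral_of_le hs.2]
    exact hH s hs

/-- Quantitative approximation of `y ∈ [0,1]` by the level-count average. -/
private lemma BDE_approx (n : ℕ) (hn : 1 ≤ n) (y : ℝ) (h0 : 0 ≤ y) (h1 : y ≤ 1) :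
    |y - (n : ℝ)⁻¹ * ∑ k ∈ Finset.Icc 1 n, (if ((k : ℝ) / (n : ℝ)) ≤ y then (1 : ℝ) else 0)|
      ≤ (n : ℝ)⁻¹ := by
  have hn0 : (0 : ℝ) < n := by exact_mod_cast hn
  have hny : (0 : ℝ) ≤ (n : ℝ) * y := by positivity
  have hsum : ∑ k ∈ Finset.Icc 1 n, (if ((k : ℝ) / (n : ℝ)) ≤ y then (1 : ℝ) else 0)
      = ((min n ⌊(n : ℝ) * y⌋₊ : ℕ) : ℝ) := by
    rw [Finset.sum_boole]
    congr 1
    have hfe : (Finset.Icc 1 n).filter (fun k : ℕ => ((k : ℝ) / (n : ℝ)) ≤ y)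
        = Finset.Icc 1 (min n ⌊(n : ℝ) * y⌋₊) := by
      ext k
      simp only [Finset.mem_filter, Finset.mem_Icc, le_min_iff]
      constructor
      · rintro ⟨⟨hk1, hk2⟩, hk3⟩
        refine ⟨hk1, hk2, ?_⟩
        rw [Nat.le_floor_iff hny]
        rw [div_le_iff₀ hn0, mul_comm] at hk3
        exact hk3
      · rintro ⟨hk1, hk2, hk3⟩
        refine ⟨⟨hk1, hk2⟩, ?_⟩
        rw [div_le_iff₀ hn0, mul_comm]
        exact (Nat.le_floor_iff hny).mp hk3
    rw [hfe, Nat.card_Icc]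
    omega
  rw [hsum]
  have hmin : ((min n ⌊(n : ℝ) * y⌋₊ : ℕ) : ℝ) = min (n : ℝ) ((⌊(n : ℝ) * y⌋₊ : ℕ) : ℝ) :=
    Nat.cast_min _ _
  have hr1 : ((min n ⌊(n : ℝ) * y⌋₊ : ℕ) : ℝ) ≤ (n : ℝ) * y := by
    rw [hmin]
    exact le_trans (min_le_right _ _) (Nat.floor_le hny)
  have hr2 : (n : ℝ) * y - 1 ≤ ((min n ⌊(n : ℝ) * y⌋₊ : ℕ) : ℝ) := by
    rw [hmin, le_min_iff]
    constructor
    · nlinarith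
    · have := Nat.lt_floor_add_one ((n : ℝ) * y)
      linarith
  have hip : (0 : ℝ) < (n : ℝ)⁻¹ := inv_pos.mpr hn0
  have e1 : (n : ℝ)⁻¹ * ((n : ℝ) * y) = y := by field_simp
  have e2 : (n : ℝ)⁻¹ * ((n : ℝ) * y - 1) = y - (n : ℝ)⁻¹ := by
    rw [mul_sub, mul_one, e1]
  rw [abs_le]
  constructor
  · have := mul_le_mul_of_nonneg_left hr1 hip.le
    rw [e1] at this
    linarith
  · have := mul_le_mul_of_nonneg_left hr2 hip.le
    rw [e2] at this
    linarith

/-- If all right tails `∫_ξ^d h ≤ 0` and `φ` is nondecreasing with values in `[0,1]`, then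
`∫_c^d φ h ≤ 0`. -/
private lemma BDE_right
    {c d : ℝ} (hcd : c ≤ d) {h φ : ℝ → ℝ}
    (hh : IntervalIntegrable h volume c d)
    (hφ : Monotone φ) (hφ0 : ∀ x, 0 ≤ φ x) (hφ1 : ∀ x, φ x ≤ 1)
    (hH : ∀ ξ ∈ Set.Icc c d, (∫ t in ξ..d, h t) ≤ 0) :
    (∫ t in c..d, φ t * h t) ≤ 0 := by
  have hφh : IntervalIntegrable (fun t => φ t * h t) volume c d := by
    rw [intervalIntegrable_iff_integrableOn_Ioc_of_le hcd] at hh ⊢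
    exact hh.bdd_mul (c := 1) hφ.measurable.aestronglyMeasurable
      (Filter.Eventually.of_forall fun x => by
        rw [Real.norm_eq_abs, abs_le]
        exact ⟨by linarith [hφ0 x], hφ1 x⟩)
  set A := ∫ t in c..d, |h t| with hA
  have key : ∀ n : ℕ, 1 ≤ n → (∫ t in c..d, φ t * h t) ≤ (n : ℝ)⁻¹ * A := by
    intro n hn
    set S : ℕ → Set ℝ := fun k => {x | ((k : ℝ) / (n : ℝ)) ≤ φ x} with hSdef
    have hSup : ∀ k, ∀ ⦃x y : ℝ⦄, x ∈ S k → x ≤ y → y ∈ S k :=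
      fun k x y hx hxy => le_trans hx (hφ hxy)
    have hlev := fun k => BDE_level hcd hh (S k) (hSup k) hH
    set σ : ℝ → ℝ := fun x => (n : ℝ)⁻¹ *
      ∑ k ∈ Finset.Icc 1 n, (if ((k : ℝ) / (n : ℝ)) ≤ φ x then (1 : ℝ) else 0) with hσdef
    set Sig : ℝ → ℝ := fun t => ∑ k ∈ Finset.Icc 1 n, (n : ℝ)⁻¹ * (S k).indicator h t
      with hSigdef
    have hσmul : ∀ t, Sig t = σ t * h t := by
      intro t
      rw [hSigdef, hσdef]
      simp only
      rw [mul_assoc, Finset.sum_mul, Finset.mul_sum]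
      refine Finset.sum_congr rfl fun k _ => ?_
      congr 1
      by_cases hk : ((k : ℝ) / (n : ℝ)) ≤ φ t
      · rw [if_pos hk, one_mul, Set.indicator_of_mem (show t ∈ S k from hk) h]
      · rw [if_neg hk, zero_mul, Set.indicator_of_notMem (show t ∉ S k from hk) h]
    have hind_int : ∀ k ∈ Finset.Icc 1 n,
        IntervalIntegrable (fun t => (n : ℝ)⁻¹ * (S k).indicator h t) volume c d :=
      fun k _ => ((hlev k).1.const_mul _)
    have hσint : IntervalIntegrable Sig volume c d := by
      have h0 := IntervalIntegrable.sum (μ := volume) (a := c) (b := d) (Finset.Icc 1 n)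
        (f := fun k t => (n : ℝ)⁻¹ * (S k).indicator h t) hind_int
      have hfn : (∑ k ∈ Finset.Icc 1 n, fun t => (n : ℝ)⁻¹ * (S k).indicator h t) = Sig := by
        rw [hSigdef]
        ext t
        simp [Finset.sum_apply]
      rwa [hfn] at h0
    have hσh_le : (∫ t in c..d, Sig t) ≤ 0 := by
      have e : (∫ t in c..d, Sig t)
          = ∑ k ∈ Finset.Icc 1 n, ∫ t in c..d, (n : ℝ)⁻¹ * (S k).indicator h t :=
        intervalIntegral.integral_finset_sum hind_int
      rw [e]
      refine Finset.sum_nonpos fun k _ => ?_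
      rw [intervalIntegral.integral_const_mul]
      exact mul_nonpos_iff.mpr (Or.inl ⟨by positivity, (hlev k).2⟩)
    have hptw : ∀ x ∈ Set.Icc c d, φ x * h x - Sig x ≤ (n : ℝ)⁻¹ * |h x| := by
      intro x _
      rw [hσmul x]
      have h1 : φ x * h x - σ x * h x = (φ x - σ x) * h x := by ring
      rw [h1]
      calc (φ x - σ x) * h x ≤ |(φ x - σ x) * h x| := le_abs_self _
        _ = |φ x - σ x| * |h x| := abs_mul _ _
        _ ≤ (n : ℝ)⁻¹ * |h x| := by
            refine mul_le_mul_of_nonneg_right ?_ (abs_nonneg _)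
            exact BDE_approx n hn (φ x) (hφ0 x) (hφ1 x)
    have hrhs_int : IntervalIntegrable (fun x => (n : ℝ)⁻¹ * |h x|) volume c d :=
      hh.abs.const_mul _
    have hsub : (∫ t in c..d, (φ t * h t - Sig t))
        = (∫ t in c..d, φ t * h t) - (∫ t in c..d, Sig t) :=
      intervalIntegral.integral_sub hφh hσint
    have hmono : (∫ t in c..d, (φ t * h t - Sig t)) ≤ ∫ t in c..d, (n : ℝ)⁻¹ * |h t| :=
      intervalIntegral.integral_mono_on hcd (hφh.sub hσint) hrhs_int hptw
    have hAr : (∫ t in c..d, (n : ℝ)⁻¹ * |h t|) = (n : ℝ)⁻¹ * A :=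
      intervalIntegral.integral_const_mul _ _
    linarith [hσh_le, hsub, hmono, hAr]
  have hlim : Filter.Tendsto (fun nn : ℕ => ((nn : ℝ))⁻¹ * A) Filter.atTop (nhds 0) := by
    simpa using tendsto_inv_atTop_nhds_zero_nat.mul_const A
  refine ge_of_tendsto hlim ?_
  filter_upwards [Filter.eventually_ge_atTop 1] with nn hnn
  exact key nn hnn

/-- Mirror version: if all left heads `∫_c^ξ h ≤ 0` and `ψ` is nonincreasing with values in
`[0,1]`, then `∫_c^d ψ h ≤ 0`. -/
private lemma BDE_left
    {c d : ℝ} (hcd : c ≤ d) {h ψ : ℝ → ℝ}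
    (hh : IntervalIntegrable h volume c d)
    (hψ : Antitone ψ) (hψ0 : ∀ x, 0 ≤ ψ x) (hψ1 : ∀ x, ψ x ≤ 1)
    (hH : ∀ ξ ∈ Set.Icc c d, (∫ t in c..ξ, h t) ≤ 0) :
    (∫ t in c..d, ψ t * h t) ≤ 0 := by
  have hcd' : -d ≤ -c := neg_le_neg hcd
  have hh' : IntervalIntegrable (fun t => h (-t)) volume (-d) (-c) :=
    ((IntervalIntegrable.iff_comp_neg (by simp)).mp hh).symm
  have hmono : Monotone (fun t => ψ (-t)) := fun x y hxy => hψ (neg_le_neg hxy)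
  have hH' : ∀ ξ ∈ Set.Icc (-d) (-c), (∫ t in ξ..(-c), h (-t)) ≤ 0 := by
    intro ξ hξ
    have h1 : (∫ t in ξ..(-c), h (-t)) = ∫ x in c..(-ξ), h x := by
      have := intervalIntegral.integral_comp_neg (a := ξ) (b := -c) (f := h)
      simpa using this
    rw [h1]
    exact hH (-ξ) ⟨by linarith [hξ.2], by linarith [hξ.1]⟩
  have hkey := BDE_right hcd' hh' hmono (fun x => hψ0 (-x)) (fun x => hψ1 (-x)) hH'
  have h2 : (∫ t in (-d)..(-c), ψ (-t) * h (-t)) = ∫ t in c..d, ψ t * h t := by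
    have := intervalIntegral.integral_comp_neg (a := -d) (b := -c)
      (f := fun x => ψ x * h x)
    simpa using this
  linarith [hkey, h2.symm.le, h2.le]

/-- The deterministic boundary estimate (3.13) in the proof of the `L¹`-contraction theorem:
with `f̄₁ : [-N,N] → [0,1]` and `f̄₂ : [-N,N] → [-1,0]` non-increasing, `|u₁|, |u₂| < N`, and
nonnegative truncated boundary defect functions `m̄₁, m̄₂`, one has
`-∫_{-N}^N (-a(ξ)) f̄₁(ξ) f̄₂(ξ) dξ ≤ M_b (u₁ - u₂)⁺`. -/
theorem boundary_defect_estimate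
    (N : ℝ) (hN : 0 < N) (a : ℝ → ℝ) (ha : ContinuousOn a (Set.Icc (-N) N))
    (MN : ℝ) (hMN : IsGreatest ((fun ξ => |a ξ|) '' Set.Icc (-N) N) MN)
    (u₁ u₂ : ℝ) (hu₁ : |u₁| < N) (hu₂ : |u₂| < N)
    (Mb : ℝ) (hMb : ∀ ξ : ℝ, |ξ| ≤ max |u₁| |u₂| → |a ξ| ≤ Mb)
    (f₁ f₂ : ℝ → ℝ)
    (hf₁_mem : ∀ ξ ∈ Set.Icc (-N) N, f₁ ξ ∈ Set.Icc (0 : ℝ) 1)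
    (hf₂_mem : ∀ ξ ∈ Set.Icc (-N) N, f₂ ξ ∈ Set.Icc (-1 : ℝ) 0)
    (hf₁_anti : AntitoneOn f₁ (Set.Icc (-N) N))
    (hf₂_anti : AntitoneOn f₂ (Set.Icc (-N) N))
    (hm₁ : ∀ ξ ∈ Set.Icc (-N) N,
      0 ≤ MN * max (u₁ - ξ) 0 - ∫ η in ξ..N, (-(a η)) * f₁ η)
    (hm₂ : ∀ ξ ∈ Set.Icc (-N) N,
      0 ≤ (∫ η in (-N)..ξ, (-(a η)) * f₂ η) + MN * max (ξ - u₂) 0) :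
    -∫ ξ in (-N)..N, (-(a ξ)) * f₁ ξ * f₂ ξ ≤ Mb * max (u₁ - u₂) 0 := by
  have hu₁' := abs_lt.mp hu₁
  have hu₂' := abs_lt.mp hu₂
  have hNN : -N ≤ N := by linarith
  set π : ℝ → ℝ := fun ξ => max (-N) (min N ξ) with hπdef
  have hπmono : Monotone π := fun x y hxy =>
    max_le_max le_rfl (min_le_min le_rfl hxy)
  have hπmem : ∀ ξ, π ξ ∈ Set.Icc (-N) N := fun ξ =>
    ⟨le_max_left _ _, max_le hNN (min_le_left _ _)⟩
  have hπid : ∀ ξ ∈ Set.Icc (-N) N, π ξ = ξ := by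
    intro ξ hξ
    rw [hπdef]
    simp only
    rw [min_eq_right hξ.2, max_eq_right hξ.1]
  have hπc : Continuous π := by
    rw [hπdef]
    exact continuous_const.max (continuous_const.min continuous_id)
  set F1 : ℝ → ℝ := fun ξ => f₁ (π ξ) with hF1
  set Φ : ℝ → ℝ := fun ξ => -f₂ (π ξ) with hΦ
  set g : ℝ → ℝ := fun ξ => -(a (π ξ)) with hg
  have hgc : Continuous g := by
    rw [hg]
    exact (ha.comp_continuous hπc hπmem).neg
  have hF1anti : Antitone F1 := fun x y hxy => hf₁_anti (hπmem x) (hπmem y) (hπmono hxy)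
  have hΦmono : Monotone Φ := fun x y hxy =>
    neg_le_neg (hf₂_anti (hπmem x) (hπmem y) (hπmono hxy))
  have hF1m : Measurable F1 := hF1anti.measurable
  have hΦm : Measurable Φ := hΦmono.measurable
  have hF10 : ∀ x, 0 ≤ F1 x := fun x => (hf₁_mem _ (hπmem x)).1
  have hF11 : ∀ x, F1 x ≤ 1 := fun x => (hf₁_mem _ (hπmem x)).2
  have hΦ0 : ∀ x, 0 ≤ Φ x := fun x => by
    have := (hf₂_mem _ (hπmem x)).2
    simp only [hΦ]
    linarith
  have hΦ1 : ∀ x, Φ x ≤ 1 := fun x => by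
    have := (hf₂_mem _ (hπmem x)).1
    simp only [hΦ]
    linarith
  have habs1 : ∀ x, |F1 x| ≤ 1 := fun x => abs_le.mpr ⟨by linarith [hF10 x], hF11 x⟩
  have habs2 : ∀ x, |Φ x| ≤ 1 := fun x => abs_le.mpr ⟨by linarith [hΦ0 x], hΦ1 x⟩
  have hII : ∀ (b : ℝ → ℝ), Measurable b → (∀ x, |b x| ≤ 1) → ∀ c' d' : ℝ,
      IntervalIntegrable (fun x => b x * g x) volume c' d' := by
    intro b hb hbd c' d'
    have hgi : IntervalIntegrable g volume c' d' := hgc.intervalIntegrable c' d'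
    exact ⟨hgi.1.bdd_mul hb.aestronglyMeasurable
        (c := 1) (Filter.Eventually.of_forall fun x => by rw [Real.norm_eq_abs]; exact hbd x),
      hgi.2.bdd_mul hb.aestronglyMeasurable
        (c := 1) (Filter.Eventually.of_forall fun x => by rw [Real.norm_eq_abs]; exact hbd x)⟩
  set m := min u₁ u₂ with hmdef
  have hmN : -N < m := lt_min hu₁'.1 hu₂'.1
  have hmu₁ : m ≤ u₁ := min_le_left _ _
  have hmu₂ : m ≤ u₂ := min_le_right _ _
  -- hypothesis H1 : right tails are nonpositive beyond u₁
  have H1 : ∀ ξ ∈ Set.Icc u₁ N, (∫ t in ξ..N, F1 t * g t) ≤ 0 := by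
    intro ξ hξ
    have hξmem : ξ ∈ Set.Icc (-N) N := ⟨by linarith [hu₁'.1, hξ.1], hξ.2⟩
    have hcong : (∫ t in ξ..N, F1 t * g t) = ∫ t in ξ..N, (-(a t)) * f₁ t := by
      refine intervalIntegral.integral_congr fun t ht => ?_
      have htmem : t ∈ Set.Icc (-N) N := by
        have hsub : Set.uIcc ξ N ⊆ Set.Icc (-N) N := by
          rw [Set.uIcc_of_le hξ.2]
          exact Set.Icc_subset_Icc hξmem.1 le_rfl
        exact hsub ht
      have hπt := hπid t htmem
      simp only [hF1, hg, hπt]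
      ring
    rw [hcong]
    have hh1 := hm₁ ξ hξmem
    rw [max_eq_right (by linarith [hξ.1] : u₁ - ξ ≤ 0)] at hh1
    linarith
  -- hypothesis H2 : left heads are nonpositive before m
  have H2 : ∀ ξ ∈ Set.Icc (-N) m, (∫ t in (-N)..ξ, Φ t * g t) ≤ 0 := by
    intro ξ hξ
    have hξmem : ξ ∈ Set.Icc (-N) N := ⟨hξ.1, by linarith [hξ.2, hmu₁, hu₁'.2]⟩
    have hcong : (∫ t in (-N)..ξ, Φ t * g t) = ∫ t in (-N)..ξ, -((-(a t)) * f₂ t) := by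
      refine intervalIntegral.integral_congr fun t ht => ?_
      have htmem : t ∈ Set.Icc (-N) N := by
        rw [Set.uIcc_of_le hξ.1] at ht
        exact ⟨ht.1, le_trans ht.2 hξmem.2⟩
      have hπt := hπid t htmem
      simp only [hΦ, hg, hπt]
      ring
    rw [hcong, intervalIntegral.integral_neg]
    have hh2 := hm₂ ξ hξmem
    rw [max_eq_right (by linarith [hξ.2, hmu₂] : ξ - u₂ ≤ 0)] at hh2
    linarith
  -- rewrite the goal
  have hgoal : -∫ ξ in (-N)..N, (-(a ξ)) * f₁ ξ * f₂ ξ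
      = ∫ ξ in (-N)..N, (F1 ξ * Φ ξ) * g ξ := by
    rw [← intervalIntegral.integral_neg]
    refine intervalIntegral.integral_congr fun ξ hξ => ?_
    have hmem : ξ ∈ Set.Icc (-N) N := by
      rwa [Set.uIcc_of_le hNN] at hξ
    have hπξ := hπid ξ hmem
    simp only [hF1, hΦ, hg, hπξ]
    ring
  have habs12 : ∀ x, |F1 x * Φ x| ≤ 1 := fun x => by
    rw [abs_mul]
    nlinarith [habs1 x, habs2 x, abs_nonneg (F1 x), abs_nonneg (Φ x)]
  have hint3 : ∀ c' d' : ℝ, IntervalIntegrable (fun ξ => (F1 ξ * Φ ξ) * g ξ) volume c' d' :=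
    hII (fun ξ => F1 ξ * Φ ξ) (hF1m.mul hΦm) habs12
  -- split the integral
  have e1 := intervalIntegral.integral_add_adjacent_intervals (hint3 (-N) m) (hint3 m u₁)
  have e2 := intervalIntegral.integral_add_adjacent_intervals (hint3 (-N) u₁) (hint3 u₁ N)
  -- right piece
  have hright : (∫ ξ in u₁..N, (F1 ξ * Φ ξ) * g ξ) ≤ 0 := by
    have hcong : (∫ ξ in u₁..N, (F1 ξ * Φ ξ) * g ξ)
        = ∫ ξ in u₁..N, Φ ξ * (F1 ξ * g ξ) :=
      intervalIntegral.integral_congr fun ξ _ => by ring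
    rw [hcong]
    exact BDE_right hu₁'.2.le (hII F1 hF1m habs1 u₁ N) hΦmono hΦ0 hΦ1 H1
  -- left piece
  have hleft : (∫ ξ in (-N)..m, (F1 ξ * Φ ξ) * g ξ) ≤ 0 := by
    have hcong : (∫ ξ in (-N)..m, (F1 ξ * Φ ξ) * g ξ)
        = ∫ ξ in (-N)..m, F1 ξ * (Φ ξ * g ξ) :=
      intervalIntegral.integral_congr fun ξ _ => by ring
    rw [hcong]
    exact BDE_left hmN.le (hII Φ hΦm habs2 (-N) m) hF1anti hF10 hF11 H2
  -- middle piece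
  have hMb0 : 0 ≤ Mb := le_trans (abs_nonneg (a 0)) (hMb 0 (by
    rw [abs_zero]
    exact le_trans (abs_nonneg u₁) (le_max_left _ _)))
  have hmid : (∫ ξ in m..u₁, (F1 ξ * Φ ξ) * g ξ) ≤ Mb * (u₁ - m) := by
    have hmb : ∀ ξ ∈ Set.Icc m u₁, (F1 ξ * Φ ξ) * g ξ ≤ Mb := by
      intro ξ hξ
      have habsξ : |ξ| ≤ max |u₁| |u₂| := by
        rw [abs_le]
        constructor
        · have h1 : -(max |u₁| |u₂|) ≤ u₁ := by
            have := le_max_left |u₁| |u₂|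
            have := neg_abs_le u₁
            linarith
          have h2 : -(max |u₁| |u₂|) ≤ u₂ := by
            have := le_max_right |u₁| |u₂|
            have := neg_abs_le u₂
            linarith
          have h3 : -(max |u₁| |u₂|) ≤ m := le_min h1 h2
          linarith [hξ.1]
        · calc ξ ≤ u₁ := hξ.2
            _ ≤ |u₁| := le_abs_self _
            _ ≤ max |u₁| |u₂| := le_max_left _ _
      have hπξ : π ξ = ξ := hπid ξ ⟨by linarith [hξ.1, hmN], by linarith [hξ.2, hu₁'.2]⟩
      have hgb : |g ξ| ≤ Mb := by
        simp only [hg, hπξ, abs_neg]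
        exact hMb ξ habsξ
      have hb : |(F1 ξ * Φ ξ) * g ξ| ≤ Mb := by
        rw [abs_mul]
        calc |F1 ξ * Φ ξ| * |g ξ| ≤ 1 * |g ξ| :=
              mul_le_mul_of_nonneg_right (habs12 ξ) (abs_nonneg _)
          _ = |g ξ| := one_mul _
          _ ≤ Mb := hgb
      linarith [le_abs_self ((F1 ξ * Φ ξ) * g ξ), hb]
    calc (∫ ξ in m..u₁, (F1 ξ * Φ ξ) * g ξ) ≤ ∫ _ in m..u₁, Mb :=
          intervalIntegral.integral_mono_on hmu₁ (hint3 m u₁) intervalIntegrable_const hmb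
      _ = (u₁ - m) * Mb := by rw [intervalIntegral.integral_const, smul_eq_mul]
      _ = Mb * (u₁ - m) := mul_comm _ _
  have hmax : Mb * max (u₁ - u₂) 0 = Mb * (u₁ - m) := by
    rw [hmdef]
    rcases le_total u₁ u₂ with hle | hle
    · rw [min_eq_left hle, max_eq_right (by linarith : u₁ - u₂ ≤ 0)]
      ring
    · rw [min_eq_right hle, max_eq_left (by linarith : 0 ≤ u₁ - u₂)]
  rw [hgoal, hmax]
  linarith [e1, e2, hleft, hmid, hright]
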